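/- Let (t₀,x₀) ∈ (0,T)×ℝ satisfy e^{r(T−t₀)}x₀ + g₁(t₀) = 0. Then the parabolic superjet of V at (t₀,x₀) is exactly the set {(0,0,P₀) : P₀ ∈ ℝ, P₀ ≥ e^{2r(T−t₀)}}. -/

import Mathlib

open Real Set Asymptotics
set_option maxHeartbeats 2000000

private lemma exp_lip_aux (x y M : ℝ) (hx : x ≤ M) (hy : y ≤ M) :
    |Real.exp x - Real.exp y| ≤ Real.exp M * |x - y| := by
  wlog h : y ≤ x generalizing x y
  · rw [abs_sub_comm, abs_sub_comm x y]; exact this y x hy hx (le_of_not_ge h)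
  have h1 : Real.exp y = Real.exp (y - x) * Real.exp x := by rw [← Real.exp_add]; ring_nf
  have h2 : Real.exp x - Real.exp y ≤ Real.exp x * (x - y) := by
    nlinarith [Real.add_one_le_exp (y - x), Real.exp_pos x]
  have h4 : (0:ℝ) ≤ Real.exp x - Real.exp y := by
    have := Real.exp_le_exp.2 h; linarith
  rw [abs_of_nonneg h4, abs_of_nonneg (by linarith : (0:ℝ) ≤ x - y)]
  have h3 : Real.exp x ≤ Real.exp M := Real.exp_le_exp.2 hx
  nlinarith [Real.exp_pos x]

theorem stmt_9
    (T r μ σ a b η θ d γ : ℝ)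
    (hT : 0 < T) (hr : 0 < r) (hσ : 0 < σ) (ha : 0 < a) (hb : 0 < b)
    (hη : 0 < η) (hμr : r < μ)
    (f : ℝ) (hf : f = a * θ - a * η + (d - γ) * r)
    (A₁ : ℝ) (hA₁ : A₁ = -(μ - r) ^ 2 / (2 * σ ^ 2) - a ^ 2 * η ^ 2 / (2 * b ^ 2))
    (g₁ : ℝ → ℝ) (hg₁ : ∀ t, g₁ t = f * (exp (r * (T - t)) - 1) / r)
    (V : ℝ → ℝ → ℝ)
    (hV : ∀ t x, V t x =
      if 0 ≤ exp (r * (T - t)) * x + g₁ t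
      then (1 / 2) * (exp (r * (T - t)) * x + g₁ t) ^ 2
      else (1 / 2) * exp (2 * A₁ * (T - t)) * (exp (r * (T - t)) * x + g₁ t) ^ 2)
    (t₀ x₀ : ℝ) (ht₀ : t₀ ∈ Ioo (0 : ℝ) T)
    (hsw : exp (r * (T - t₀)) * x₀ + g₁ t₀ = 0) :
    {w : ℝ × ℝ × ℝ |
      (fun p : ℝ × ℝ =>
          max (V p.1 p.2 - V t₀ x₀ - w.1 * (p.1 - t₀) - w.2.1 * (p.2 - x₀)
            - (1 / 2) * w.2.2 * (p.2 - x₀) ^ 2) 0)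
        =o[nhdsWithin (t₀, x₀) (Icc (0 : ℝ) T ×ˢ (univ : Set ℝ))]
      (fun p : ℝ × ℝ => |p.1 - t₀| + |p.2 - x₀| ^ 2)}
    = {w : ℝ × ℝ × ℝ | w.1 = 0 ∧ w.2.1 = 0 ∧ exp (2 * r * (T - t₀)) ≤ w.2.2} := by
  obtain ⟨ht0, htT⟩ := ht₀
  have hKpos : (0:ℝ) < Real.exp (r * (T - t₀)) := Real.exp_pos _
  set K : ℝ := Real.exp (r * (T - t₀)) with hKdef
  have hK2 : Real.exp (2 * r * (T - t₀)) = K ^ 2 := by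
    rw [show 2 * r * (T - t₀) = r * (T - t₀) + r * (T - t₀) by ring, Real.exp_add]
    rw [hKdef]; ring
  have hA₁neg : A₁ < 0 := by
    have h1 : 0 < (μ - r) ^ 2 := pow_pos (by linarith) 2
    have h2 : 0 < 2 * σ ^ 2 := by positivity
    have h3 : 0 < (μ - r) ^ 2 / (2 * σ ^ 2) := div_pos h1 h2
    have h4 : 0 < a ^ 2 * η ^ 2 / (2 * b ^ 2) := by positivity
    rw [hA₁, neg_div]; linarith
  -- basic facts about V
  have hV00 : V t₀ x₀ = 0 := by rw [hV t₀ x₀, hsw]; norm_num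
  have hVnn : ∀ s y, 0 ≤ V s y := by
    intro s y; rw [hV]; split <;> positivity
  have hVle : ∀ s y, s ≤ T → V s y ≤ (1/2) * (Real.exp (r*(T-s)) * y + g₁ s)^2 := by
    intro s y hsT; rw [hV]
    split
    · exact le_refl _
    · have h1 : Real.exp (2*A₁*(T-s)) ≤ 1 := by
        rw [Real.exp_le_one_iff]; nlinarith
      nlinarith [sq_nonneg (Real.exp (r*(T-s)) * y + g₁ s), Real.exp_pos (2*A₁*(T-s))]
  -- the switching identity at t₀
  have hkey0 : ∀ h : ℝ, Real.exp (r*(T-t₀)) * (x₀ + h) + g₁ t₀ = K * h := by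
    intro h; rw [hKdef]; linear_combination hsw
  -- ψ identity
  have hswf : K * x₀ + f * (K - 1) / r = 0 := by
    rw [hg₁ t₀] at hsw; rw [hKdef]; exact hsw
  have hψ : ∀ s, Real.exp (r*(T-s)) * x₀ + g₁ s
      = (x₀ + f/r) * (Real.exp (r*(T-s)) - K) := by
    intro s; rw [hg₁ s]
    linear_combination hswf
  -- exp bounds
  set M : ℝ := Real.exp (r * (T - t₀) + r) with hMdef
  have hMpos : 0 < M := Real.exp_pos _
  have hEub : ∀ s, |s - t₀| ≤ 1 → Real.exp (r*(T-s)) ≤ M := by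
    intro s hs
    rw [hMdef]; apply Real.exp_le_exp.2
    rw [abs_le] at hs; nlinarith
  set m : ℝ := Real.exp (r * (T - t₀) - r) with hmdef
  have hmpos : 0 < m := Real.exp_pos _
  have hElb : ∀ s, |s - t₀| ≤ 1 → m ≤ Real.exp (r*(T-s)) := by
    intro s hs
    rw [hmdef]; apply Real.exp_le_exp.2
    rw [abs_le] at hs; nlinarith
  have hElip : ∀ s, |s - t₀| ≤ 1 → |Real.exp (r*(T-s)) - K| ≤ (M*r) * |s - t₀| := by
    intro s hs
    have h1 : r*(T-s) ≤ r * (T - t₀) + r := by rw [abs_le] at hs; nlinarith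
    have h2 : r*(T-t₀) ≤ r * (T - t₀) + r := by nlinarith
    have := exp_lip_aux (r*(T-s)) (r*(T-t₀)) (r*(T-t₀)+r) h1 h2
    rw [hKdef, hMdef]
    calc |Real.exp (r*(T-s)) - Real.exp (r*(T-t₀))|
        ≤ Real.exp (r*(T-t₀)+r) * |r*(T-s) - r*(T-t₀)| := this
      _ = Real.exp (r*(T-t₀)+r) * (r * |s - t₀|) := by
          rw [show r*(T-s) - r*(T-t₀) = r * (t₀ - s) by ring, abs_mul,
            abs_of_pos hr, abs_sub_comm]
      _ = Real.exp (r*(T-t₀)+r) * r * |s - t₀| := by ring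
  have hKleM : K ≤ M := by
    rw [hKdef, hMdef]; apply Real.exp_le_exp.2; linarith
  have hE2lip : ∀ s, |s - t₀| ≤ 1 →
      |Real.exp (r*(T-s))^2 - K^2| ≤ (2*M^2*r) * |s - t₀| := by
    intro s hs
    have h1 := hElip s hs
    have h2 := hEub s hs
    have h3 : (0:ℝ) < Real.exp (r*(T-s)) := Real.exp_pos _
    have : Real.exp (r*(T-s))^2 - K^2
        = (Real.exp (r*(T-s)) - K) * (Real.exp (r*(T-s)) + K) := by ring
    rw [this, abs_mul]
    have h4 : |Real.exp (r*(T-s)) + K| ≤ 2*M := by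
      rw [abs_of_pos (by positivity)]; linarith
    calc |Real.exp (r*(T-s)) - K| * |Real.exp (r*(T-s)) + K|
        ≤ ((M*r) * |s - t₀|) * (2*M) := by
          apply mul_le_mul h1 h4 (abs_nonneg _) (by positivity)
      _ = (2*M^2*r) * |s - t₀| := by ring
  set cc : ℝ := |x₀ + f/r| with hccdef
  have hccnn : 0 ≤ cc := abs_nonneg _
  have hψb : ∀ s, |s - t₀| ≤ 1 →
      |Real.exp (r*(T-s)) * x₀ + g₁ s| ≤ (cc*M*r) * |s - t₀| := by
    intro s hs
    rw [hψ s, abs_mul, hccdef]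
    calc |x₀ + f/r| * |Real.exp (r*(T-s)) - K|
        ≤ |x₀ + f/r| * ((M*r) * |s - t₀|) :=
          mul_le_mul_of_nonneg_left (hElip s hs) (abs_nonneg _)
      _ = (|x₀ + f/r| * M * r) * |s - t₀| := by ring
  ext w
  obtain ⟨q₀, p₀, P₀⟩ := w
  simp only [Set.mem_setOf_eq]
  constructor
  · -- forward: superjet member → (0,0,P₀ ≥ K²)
    intro H
    -- quantitative extraction
    have key : ∀ ε : ℝ, 0 < ε → ∃ δ : ℝ, 0 < δ ∧ ∀ s y : ℝ, s ∈ Icc (0:ℝ) T →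
        |s - t₀| < δ → |y - x₀| < δ →
        V s y - q₀*(s-t₀) - p₀*(y-x₀) - (1/2)*P₀*(y-x₀)^2
          ≤ ε * (|s-t₀| + |y-x₀|^2) := by
      intro ε hε
      have h2 := H.def hε
      rw [Filter.eventually_iff] at h2
      obtain ⟨δ, hδ, hsub⟩ := Metric.mem_nhdsWithin_iff.mp h2
      refine ⟨δ, hδ, ?_⟩
      intro s y hsI hs hy
      have hmem : (s, y) ∈ Metric.ball ((t₀ : ℝ), (x₀ : ℝ)) δ ∩ (Icc (0:ℝ) T ×ˢ (univ : Set ℝ)) := by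
        refine ⟨?_, ⟨hsI, mem_univ _⟩⟩
        rw [Metric.mem_ball, Prod.dist_eq]
        simp only [Real.dist_eq]
        exact max_lt hs hy
      have h3 := hsub hmem
      simp only [Set.mem_setOf_eq] at h3
      have hg0 : (0:ℝ) ≤ |s - t₀| + |y - x₀|^2 := by positivity
      rw [Real.norm_eq_abs, Real.norm_eq_abs, abs_of_nonneg (le_max_right _ _),
        abs_of_nonneg hg0] at h3
      have h4 : V s y - V t₀ x₀ - q₀*(s-t₀) - p₀*(y-x₀) - (1/2)*P₀*(y-x₀)^2
          ≤ ε * (|s-t₀| + |y-x₀|^2) := le_trans (le_max_left _ _) h3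
      rw [hV00] at h4
      have h5 : |y - x₀|^2 = (y-x₀)^2 := sq_abs _
      rw [h5] at h4 ⊢
      linarith only [h4]
    -- p₀ = 0
    have hCp : (0:ℝ) < 1 + |P₀|/2 := by positivity
    have hple : p₀ ≤ 0 := by
      by_contra hp0
      push_neg at hp0
      obtain ⟨δ, hδ, hk⟩ := key 1 one_pos
      set dd : ℝ := min (δ/2) (p₀/(2*(1+|P₀|/2))) with hdd
      have hddpos : 0 < dd := lt_min (by linarith) (div_pos hp0 (by linarith))
      have hddδ : dd < δ := lt_of_le_of_lt (min_le_left _ _) (by linarith)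
      have hd2 : dd ≤ p₀/(2*(1+|P₀|/2)) := min_le_right _ _
      have h1 := hk t₀ (x₀ + (-dd)) ⟨le_of_lt ht0, le_of_lt htT⟩
        (by simpa using hδ)
        (by rw [add_sub_cancel_left, abs_neg, abs_of_pos hddpos]; exact hddδ)
      simp only [sub_self, abs_zero, add_sub_cancel_left, mul_zero, zero_add] at h1
      rw [abs_neg, abs_of_pos hddpos] at h1
      have hVp := hVnn t₀ (x₀ + (-dd))
      -- h1 : V - q₀*0 - p₀*(-dd) - ½P₀ dd² ≤ dd²  (roughly)
      have mp : 0 ≤ (|P₀| - P₀) * dd^2 :=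
        mul_nonneg (sub_nonneg.2 (le_abs_self P₀)) (sq_nonneg dd)
      have e1 : p₀ * dd ≤ ((1 + |P₀|/2) * dd) * dd := by
        linarith only [h1, hVp, mp]
      have e2 : p₀ ≤ (1 + |P₀|/2) * dd := (mul_le_mul_iff_of_pos_right hddpos).mp e1
      have hid : (1 + |P₀|/2) * (p₀/(2*(1+|P₀|/2))) = p₀/2 := by
        have h0 : (1 + |P₀|/2) ≠ 0 := ne_of_gt hCp
        field_simp
      have e3 : (1 + |P₀|/2) * dd ≤ p₀/2 := by
        calc (1 + |P₀|/2) * dd ≤ (1 + |P₀|/2) * (p₀/(2*(1+|P₀|/2))) :=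
              mul_le_mul_of_nonneg_left hd2 hCp.le
          _ = p₀/2 := hid
      linarith
    have hpge : 0 ≤ p₀ := by
      by_contra hp0
      push_neg at hp0
      obtain ⟨δ, hδ, hk⟩ := key 1 one_pos
      set dd : ℝ := min (δ/2) ((-p₀)/(2*(1+|P₀|/2))) with hdd
      have hddpos : 0 < dd := lt_min (by linarith) (div_pos (by linarith) (by linarith))
      have hddδ : dd < δ := lt_of_le_of_lt (min_le_left _ _) (by linarith)
      have hd2 : dd ≤ (-p₀)/(2*(1+|P₀|/2)) := min_le_right _ _
      have h1 := hk t₀ (x₀ + dd) ⟨le_of_lt ht0, le_of_lt htT⟩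
        (by simpa using hδ)
        (by rw [add_sub_cancel_left, abs_of_pos hddpos]; exact hddδ)
      simp only [sub_self, abs_zero, add_sub_cancel_left, mul_zero, zero_add] at h1
      rw [abs_of_pos hddpos] at h1
      have hVp := hVnn t₀ (x₀ + dd)
      have mp : 0 ≤ (|P₀| - P₀) * dd^2 :=
        mul_nonneg (sub_nonneg.2 (le_abs_self P₀)) (sq_nonneg dd)
      have e1 : (-p₀) * dd ≤ ((1 + |P₀|/2) * dd) * dd := by
        linarith only [h1, hVp, mp]
      have e2 : -p₀ ≤ (1 + |P₀|/2) * dd := (mul_le_mul_iff_of_pos_right hddpos).mp e1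
      have hid : (1 + |P₀|/2) * ((-p₀)/(2*(1+|P₀|/2))) = -p₀/2 := by
        have h0 : (1 + |P₀|/2) ≠ 0 := ne_of_gt hCp
        field_simp
      have e3 : (1 + |P₀|/2) * dd ≤ -p₀/2 := by
        calc (1 + |P₀|/2) * dd ≤ (1 + |P₀|/2) * ((-p₀)/(2*(1+|P₀|/2))) :=
              mul_le_mul_of_nonneg_left hd2 hCp.le
          _ = -p₀/2 := hid
      linarith
    have hp₀ : p₀ = 0 := le_antisymm hple hpge
    -- P₀ ≥ K²
    have hP₀ : Real.exp (2 * r * (T - t₀)) ≤ P₀ := by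
      rw [hK2]
      apply le_of_forall_pos_le_add
      intro ε hε
      obtain ⟨δ, hδ, hk⟩ := key (ε/2) (by linarith)
      set dd : ℝ := δ/2 with hdd
      have hddpos : 0 < dd := by linarith
      have h1 := hk t₀ (x₀ + dd) ⟨le_of_lt ht0, le_of_lt htT⟩
        (by simpa using hδ)
        (by rw [add_sub_cancel_left, abs_of_pos hddpos]; linarith)
      simp only [sub_self, abs_zero, add_sub_cancel_left, mul_zero, zero_add] at h1
      rw [abs_of_pos hddpos] at h1
      have hVv : V t₀ (x₀ + dd) = (1/2) * (K*dd)^2 := by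
        rw [hV, hkey0 dd, if_pos (by positivity)]
      rw [hVv, hp₀] at h1
      have e1 : (K^2 - P₀ - ε) * dd^2 ≤ 0 := by linarith only [h1]
      nlinarith only [e1, pow_pos hddpos 2]
    -- q₀ = 0
    set C4 : ℝ := cc * (M*r) / m with hC4def
    have hC4nn : 0 ≤ C4 := by positivity
    have hcurve : ∀ s, |s - t₀| ≤ 1 →
        ∃ hh : ℝ, |hh| ≤ C4 * |s - t₀| ∧ V s (x₀ + hh) = 0 := by
      intro s hs
      have hEpos : (0:ℝ) < Real.exp (r*(T-s)) := Real.exp_pos _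
      refine ⟨-((x₀ + f/r) * (Real.exp (r*(T-s)) - K) / Real.exp (r*(T-s))), ?_, ?_⟩
      · rw [abs_neg, abs_div, abs_mul, abs_of_pos hEpos, div_le_iff₀ hEpos]
        have h1 := hElip s hs
        have h2 := hElb s hs
        calc |x₀ + f/r| * |Real.exp (r*(T-s)) - K|
            ≤ cc * ((M*r) * |s - t₀|) := by
              rw [hccdef]
              exact mul_le_mul_of_nonneg_left h1 (abs_nonneg _)
          _ = (cc * (M*r) / m) * |s - t₀| * m := by field_simp
          _ ≤ C4 * |s - t₀| * Real.exp (r*(T-s)) := by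
              rw [hC4def]
              apply mul_le_mul_of_nonneg_left h2 (by positivity)
      · rw [hV]
        have hφ0 : Real.exp (r*(T-s)) * (x₀ + -((x₀ + f/r) * (Real.exp (r*(T-s)) - K) / Real.exp (r*(T-s)))) + g₁ s = 0 := by
          have hcan : Real.exp (r*(T-s)) * ((x₀ + f/r) * (Real.exp (r*(T-s)) - K) / Real.exp (r*(T-s)))
              = (x₀ + f/r) * (Real.exp (r*(T-s)) - K) := by
            rw [mul_comm, div_mul_cancel₀ _ (ne_of_gt hEpos)]
          rw [mul_add, mul_neg, hcan]
          linarith [hψ s]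
        rw [hφ0, if_pos (le_refl (0:ℝ))]
        norm_num
    have hq₀ : q₀ = 0 := by
      have hqle : q₀ ≤ 0 := by
        by_contra hq0
        push_neg at hq0
        obtain ⟨δ, hδ, hk⟩ := key (q₀/2) (by linarith)
        set B : ℝ := (q₀/2 + |P₀|/2) * C4^2 with hB
        have hBnn : 0 ≤ B := by
          rw [hB]; exact mul_nonneg (by linarith [abs_nonneg P₀]) (sq_nonneg C4)
        set dd : ℝ := min (min 1 (min t₀ (T - t₀))) (min (δ/(2*(C4+1))) (q₀/(2*(B+1)))) with hdd
        have hddpos : 0 < dd := by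
          apply lt_min (lt_min one_pos (lt_min ht0 (by linarith)))
          exact lt_min (div_pos hδ (by linarith)) (div_pos (by linarith) (by linarith))
        have hdd1 : dd ≤ 1 := le_trans (min_le_left _ _) (min_le_left _ _)
        have hddt₀ : dd ≤ t₀ := le_trans (min_le_left _ _) (le_trans (min_le_right _ _) (min_le_left _ _))
        have hddδ' : dd ≤ δ/(2*(C4+1)) := le_trans (min_le_right _ _) (min_le_left _ _)
        have hddq : dd ≤ q₀/(2*(B+1)) := le_trans (min_le_right _ _) (min_le_right _ _)
        have hddδ : dd < δ := by
          have h0 : δ/(2*(C4+1)) ≤ δ/2 := by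
            apply div_le_div_of_nonneg_left hδ.le (by linarith) (by linarith)
          linarith
        set s : ℝ := t₀ - dd with hsdef
        have hst : s - t₀ = -dd := by rw [hsdef]; ring
        have habs : |s - t₀| = dd := by rw [hst, abs_neg, abs_of_pos hddpos]
        have hs1 : |s - t₀| ≤ 1 := by rw [habs]; exact hdd1
        obtain ⟨hh, hhb, hVz⟩ := hcurve s hs1
        rw [habs] at hhb
        have hhδ : |hh| < δ := by
          have hid : (C4+1) * (δ/(2*(C4+1))) = δ/2 := by
            have h0 : C4 + 1 ≠ 0 := by linarith
            field_simp
          calc |hh| ≤ C4 * dd := hhb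
            _ ≤ (C4+1) * dd := by linarith only [hddpos]
            _ ≤ (C4+1) * (δ/(2*(C4+1))) := mul_le_mul_of_nonneg_left hddδ' (by linarith)
            _ = δ/2 := hid
            _ < δ := by linarith
        have h1 := hk s (x₀ + hh) ⟨by rw [hsdef]; linarith, by rw [hsdef]; linarith⟩
          (by rw [habs]; exact hddδ)
          (by rw [add_sub_cancel_left]; exact hhδ)
        rw [hVz, habs, hst, add_sub_cancel_left, hp₀, sq_abs] at h1
        -- h1 : 0 - q₀*(-dd) - 0*hh - ½P₀hh² ≤ (q₀/2)*(dd + hh²)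
        have hh2 : hh^2 ≤ (C4*dd)^2 := by
          rw [← sq_abs hh]
          exact pow_le_pow_left₀ (abs_nonneg hh) hhb 2
        have mp : 0 ≤ (|P₀| - P₀) * hh^2 :=
          mul_nonneg (sub_nonneg.2 (le_abs_self P₀)) (sq_nonneg hh)
        have mh : (q₀/2 + |P₀|/2) * hh^2 ≤ (q₀/2 + |P₀|/2) * (C4*dd)^2 :=
          mul_le_mul_of_nonneg_left hh2 (by linarith only [hq0, abs_nonneg P₀])
        have e1 : (q₀/2) * dd ≤ (B * dd) * dd := by
          rw [hB]
          linarith only [h1, mp, mh]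
        have e2 : q₀/2 ≤ B * dd := (mul_le_mul_iff_of_pos_right hddpos).mp e1
        have hid2 : (B+1) * (q₀/(2*(B+1))) = q₀/2 := by
          have h0 : B + 1 ≠ 0 := by linarith
          field_simp
        have e4 : (B+1) * dd ≤ q₀/2 := by
          calc (B+1) * dd ≤ (B+1) * (q₀/(2*(B+1))) :=
                mul_le_mul_of_nonneg_left hddq (by linarith)
            _ = q₀/2 := hid2
        linarith only [e2, e4, hddpos]
      have hqge : 0 ≤ q₀ := by
        by_contra hq0
        push_neg at hq0
        obtain ⟨δ, hδ, hk⟩ := key (-q₀/2) (by linarith)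
        set B : ℝ := (-q₀/2 + |P₀|/2) * C4^2 with hB
        have hBnn : 0 ≤ B := by
          rw [hB]; exact mul_nonneg (by linarith [abs_nonneg P₀]) (sq_nonneg C4)
        set dd : ℝ := min (min 1 (min t₀ (T - t₀))) (min (δ/(2*(C4+1))) ((-q₀)/(2*(B+1)))) with hdd
        have hddpos : 0 < dd := by
          apply lt_min (lt_min one_pos (lt_min ht0 (by linarith)))
          exact lt_min (div_pos hδ (by linarith)) (div_pos (by linarith) (by linarith))
        have hdd1 : dd ≤ 1 := le_trans (min_le_left _ _) (min_le_left _ _)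
        have hddT : dd ≤ T - t₀ := le_trans (min_le_left _ _) (le_trans (min_le_right _ _) (min_le_right _ _))
        have hddδ' : dd ≤ δ/(2*(C4+1)) := le_trans (min_le_right _ _) (min_le_left _ _)
        have hddq : dd ≤ (-q₀)/(2*(B+1)) := le_trans (min_le_right _ _) (min_le_right _ _)
        have hddδ : dd < δ := by
          have h0 : δ/(2*(C4+1)) ≤ δ/2 := by
            apply div_le_div_of_nonneg_left hδ.le (by linarith) (by linarith)
          linarith
        set s : ℝ := t₀ + dd with hsdef
        have hst : s - t₀ = dd := by rw [hsdef]; ring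
        have habs : |s - t₀| = dd := by rw [hst, abs_of_pos hddpos]
        have hs1 : |s - t₀| ≤ 1 := by rw [habs]; exact hdd1
        obtain ⟨hh, hhb, hVz⟩ := hcurve s hs1
        rw [habs] at hhb
        have hhδ : |hh| < δ := by
          have hid : (C4+1) * (δ/(2*(C4+1))) = δ/2 := by
            have h0 : C4 + 1 ≠ 0 := by linarith
            field_simp
          calc |hh| ≤ C4 * dd := hhb
            _ ≤ (C4+1) * dd := by linarith only [hddpos]
            _ ≤ (C4+1) * (δ/(2*(C4+1))) := mul_le_mul_of_nonneg_left hddδ' (by linarith)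
            _ = δ/2 := hid
            _ < δ := by linarith
        have h1 := hk s (x₀ + hh) ⟨by rw [hsdef]; linarith, by rw [hsdef]; linarith⟩
          (by rw [habs]; exact hddδ)
          (by rw [add_sub_cancel_left]; exact hhδ)
        rw [hVz, habs, hst, add_sub_cancel_left, hp₀, sq_abs] at h1
        have hh2 : hh^2 ≤ (C4*dd)^2 := by
          rw [← sq_abs hh]
          exact pow_le_pow_left₀ (abs_nonneg hh) hhb 2
        have mp : 0 ≤ (|P₀| - P₀) * hh^2 :=
          mul_nonneg (sub_nonneg.2 (le_abs_self P₀)) (sq_nonneg hh)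
        have mh : (-q₀/2 + |P₀|/2) * hh^2 ≤ (-q₀/2 + |P₀|/2) * (C4*dd)^2 :=
          mul_le_mul_of_nonneg_left hh2 (by linarith only [hq0, abs_nonneg P₀])
        have e1 : (-q₀/2) * dd ≤ (B * dd) * dd := by
          rw [hB]
          linarith only [h1, mp, mh]
        have e2 : -q₀/2 ≤ B * dd := (mul_le_mul_iff_of_pos_right hddpos).mp e1
        have hid2 : (B+1) * ((-q₀)/(2*(B+1))) = -q₀/2 := by
          have h0 : B + 1 ≠ 0 := by linarith
          field_simp
        have e4 : (B+1) * dd ≤ -q₀/2 := by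
          calc (B+1) * dd ≤ (B+1) * ((-q₀)/(2*(B+1))) :=
                mul_le_mul_of_nonneg_left hddq (by linarith)
            _ = -q₀/2 := hid2
        linarith only [e2, e4, hddpos]
      exact le_antisymm hqle hqge
    exact ⟨hq₀, hp₀, hP₀⟩
  · -- reverse inclusion
    rintro ⟨hq, hp, hP⟩
    subst hq
    subst hp
    rw [hK2] at hP
    rw [Asymptotics.isLittleO_iff]
    intro ε hε
    set Cb : ℝ := M^2*r + M*(cc*M*r) + (1/2)*(cc*M*r)^2 + 1 with hCb
    have hCbpos : 0 < Cb := by positivity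
    set δ : ℝ := min 1 (ε/Cb) with hδdef
    have hδpos : 0 < δ := lt_min one_pos (div_pos hε hCbpos)
    have hδ1 : δ ≤ 1 := min_le_left _ _
    have hδε : Cb * δ ≤ ε := by
      have h1 : δ ≤ ε/Cb := min_le_right _ _
      calc Cb * δ ≤ Cb * (ε/Cb) := mul_le_mul_of_nonneg_left h1 hCbpos.le
        _ = ε := by field_simp
    rw [Filter.eventually_iff]
    apply Metric.mem_nhdsWithin_iff.mpr
    refine ⟨δ, hδpos, ?_⟩
    rintro ⟨s, y⟩ ⟨hball, hS⟩
    obtain ⟨hsI, -⟩ := hS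
    simp only [Set.mem_setOf_eq]
    rw [Metric.mem_ball, Prod.dist_eq] at hball
    simp only [Real.dist_eq] at hball
    rw [max_lt_iff] at hball
    obtain ⟨hs, hy⟩ := hball
    have hs1 : |s - t₀| ≤ 1 := le_trans hs.le hδ1
    have hsT : s ≤ T := hsI.2
    have hτnn : (0:ℝ) ≤ |s - t₀| := abs_nonneg _
    have hEpos : (0:ℝ) < Real.exp (r*(T-s)) := Real.exp_pos _
    have hEu := hEub s hs1
    -- bound for the affine part
    have hwb : |(x₀ + f/r) * (Real.exp (r*(T-s)) - K)| ≤ cc*M*r*|s-t₀| := by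
      rw [← hψ s]; exact hψb s hs1
    have c1 : Real.exp (r*(T-s))^2 - K^2 ≤ 2*M^2*r*δ := by
      have h0 := hE2lip s hs1
      have h2 : |s - t₀| ≤ δ := hs.le
      have h3 : 2*M^2*r*|s-t₀| ≤ 2*M^2*r*δ := by
        apply mul_le_mul_of_nonneg_left h2 (by positivity)
      linarith only [h0, h3, le_abs_self (Real.exp (r*(T-s))^2 - K^2)]
    have hub := hVle s y hsT
    have hEq : Real.exp (r*(T-s)) * y + g₁ s
        = Real.exp (r*(T-s)) * (y-x₀) + (x₀+f/r)*(Real.exp (r*(T-s)) - K) := by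
      linear_combination hψ s
    rw [hEq] at hub
    -- term bounds
    have b1 : (Real.exp (r*(T-s))^2 - K^2)*(y-x₀)^2 ≤ (2*M^2*r*δ)*(y-x₀)^2 :=
      mul_le_mul_of_nonneg_right c1 (sq_nonneg _)
    have b3 : Real.exp (r*(T-s)) * (y-x₀) * ((x₀+f/r)*(Real.exp (r*(T-s)) - K))
        ≤ M * δ * (cc*M*r*|s-t₀|) := by
      calc Real.exp (r*(T-s)) * (y-x₀) * ((x₀+f/r)*(Real.exp (r*(T-s)) - K))
          ≤ |Real.exp (r*(T-s)) * (y-x₀) * ((x₀+f/r)*(Real.exp (r*(T-s)) - K))| := le_abs_self _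
        _ = |Real.exp (r*(T-s))| * |y-x₀| * |(x₀+f/r)*(Real.exp (r*(T-s)) - K)| := by
            rw [abs_mul, abs_mul]
        _ ≤ M * δ * (cc*M*r*|s-t₀|) := by
            apply mul_le_mul _ hwb (abs_nonneg _) (by positivity)
            apply mul_le_mul _ hy.le (abs_nonneg _) (by positivity)
            rw [abs_of_pos hEpos]; exact hEu
    have b4 : (1/2)*((x₀+f/r)*(Real.exp (r*(T-s)) - K))^2
        ≤ (1/2)*(cc*M*r)^2*δ*|s-t₀| := by
      have h0 : ((x₀+f/r)*(Real.exp (r*(T-s)) - K))^2 ≤ (cc*M*r*|s-t₀|)^2 := by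
        rw [← sq_abs]
        exact pow_le_pow_left₀ (abs_nonneg _) hwb 2
      have h2 : (cc*M*r*|s-t₀|)^2 ≤ (cc*M*r)^2*δ*|s-t₀| := by
        have h4 : (0:ℝ) ≤ (cc*M*r)^2 * |s-t₀| := by positivity
        calc (cc*M*r*|s-t₀|)^2 = ((cc*M*r)^2*|s-t₀|) * |s-t₀| := by ring
          _ ≤ ((cc*M*r)^2*|s-t₀|) * δ := mul_le_mul_of_nonneg_left hs.le h4
          _ = (cc*M*r)^2*δ*|s-t₀| := by ring
      linarith
    have m2 : 0 ≤ (P₀ - K^2) * (y-x₀)^2 :=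
      mul_nonneg (by linarith) (sq_nonneg _)
    have big : V s y - (1/2)*P₀*(y-x₀)^2
        ≤ (M^2*r*δ)*(y-x₀)^2 + (M*(cc*M*r)*δ)*|s-t₀| + ((1/2)*(cc*M*r)^2*δ)*|s-t₀| := by
      linarith only [hub, b1, b3, b4, m2]
    have hpos2 : (0:ℝ) ≤ (M*(cc*M*r) + (1/2)*(cc*M*r)^2 + 1)*(δ*(y-x₀)^2)
        + (M^2*r+1)*(δ*|s-t₀|) := by positivity
    have hsum : (M^2*r*δ)*(y-x₀)^2 + (M*(cc*M*r)*δ)*|s-t₀| + ((1/2)*(cc*M*r)^2*δ)*|s-t₀|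
        ≤ (Cb*δ)*(|s-t₀| + (y-x₀)^2) := by
      rw [hCb]; linarith only [hpos2]
    have final : (Cb*δ)*(|s-t₀| + (y-x₀)^2) ≤ ε*(|s-t₀| + (y-x₀)^2) :=
      mul_le_mul_of_nonneg_right hδε (by positivity)
    have hgnn : (0:ℝ) ≤ |s - t₀| + |y - x₀|^2 := by positivity
    rw [Real.norm_eq_abs, Real.norm_eq_abs, abs_of_nonneg (le_max_right _ _),
      abs_of_nonneg hgnn]
    apply max_le _ (by positivity)
    rw [hV00, sq_abs]
    have goal2 : V s y - (1/2)*P₀*(y-x₀)^2 ≤ ε*(|s-t₀| + (y-x₀)^2) :=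
      le_trans big (le_trans hsum final)
    linarith only [goal2]
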